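/- Let $\overline{\chi} > 0$, $k_0, s_0 > 0$, and $(\mu_j)_{j\ge1}$ positive reals with $0 < c \le \mu_j \le M$ for all $j$. Let $(\xi_j)$ be independent random variables with $\mathbb{E}[\xi_j] = \mu_j\overline{\chi}$ and uniformly bounded variances. Define $\hat{\chi}_i = \frac{k_0 s_0 + s_0\sum_{j=1}^{i-1}\xi_j}{1 + s_0\sum_{j=1}^{i-1}\mu_j}$. Then $\mathbb{E}[(\hat{\chi}_i - \overline{\chi})^2] \to 0$ as $i \to \infty$, i.e., $\hat{\chi}_i$ converges to $\overline{\chi}$ in mean square. -/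

import Mathlib

open Finset Filter MeasureTheory ProbabilityTheory

set_option maxHeartbeats 1000000 in
theorem external_factor_estimate_tendsto_in_mean_square
    {Ω : Type*} [MeasurableSpace Ω] (P : Measure Ω) [IsProbabilityMeasure P]
    (χ k₀ s₀ c M V : ℝ) (hχ : 0 < χ) (hk : 0 < k₀) (hs : 0 < s₀) (hc : 0 < c)
    (μ : ℕ → ℝ) (hμc : ∀ j, c ≤ μ j) (hμM : ∀ j, μ j ≤ M)
    (ξ : ℕ → Ω → ℝ) (hmeas : ∀ j, Measurable (ξ j))
    (hL2 : ∀ j, MemLp (ξ j) 2 P)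
    (hindep : iIndepFun ξ P)
    (hmean : ∀ j, ∫ ω, ξ j ω ∂P = μ j * χ)
    (hvar : ∀ j, variance (ξ j) P ≤ V) :
    Tendsto (fun i => ∫ ω,
        ((k₀ * s₀ + s₀ * ∑ j ∈ range i, ξ j ω) /
          (1 + s₀ * ∑ j ∈ range i, μ j) - χ) ^ 2 ∂P) atTop (nhds 0) := by
  have hV : 0 ≤ V := le_trans (variance_nonneg (ξ 0) P) (hvar 0)
  set K : ℝ := (k₀ * s₀ - χ) ^ 2 with hK
  have hK0 : 0 ≤ K := sq_nonneg _
  -- the sum process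
  set S : ℕ → Ω → ℝ := fun i => ∑ j ∈ range i, ξ j with hS
  have hSapp : ∀ i ω, S i ω = ∑ j ∈ range i, ξ j ω := by
    intro i ω; rw [hS]; simp
  have hSL2 : ∀ i, MemLp (S i) 2 P := by
    intro i
    exact memLp_finsetSum' (range i) (fun j _ => hL2 j)
  have hSmean : ∀ i, ∫ ω, S i ω ∂P = (∑ j ∈ range i, μ j) * χ := by
    intro i
    simp_rw [hSapp]
    rw [integral_finset_sum _ (fun j _ => (hL2 j).integrable one_le_two)]
    simp_rw [hmean, Finset.sum_mul]
  have hSvar : ∀ i, variance (S i) P = ∑ j ∈ range i, variance (ξ j) P := by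
    intro i
    rw [hS]
    apply IndepFun.variance_sum (fun j _ => hL2 j)
    intro a _ b _ hab
    exact hindep.indepFun hab
  -- positivity of denominators
  have hDpos : ∀ i : ℕ, 0 < 1 + s₀ * ∑ j ∈ range i, μ j := by
    intro i
    have : (0:ℝ) ≤ ∑ j ∈ range i, μ j :=
      Finset.sum_nonneg fun j _ => le_trans hc.le (hμc j)
    nlinarith
  -- key formula
  have key : ∀ i, (∫ ω,
      ((k₀ * s₀ + s₀ * ∑ j ∈ range i, ξ j ω) /
        (1 + s₀ * ∑ j ∈ range i, μ j) - χ) ^ 2 ∂P)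
      = (s₀ / (1 + s₀ * ∑ j ∈ range i, μ j)) ^ 2 * variance (S i) P
        + K / (1 + s₀ * ∑ j ∈ range i, μ j) ^ 2 := by
    intro i
    set D : ℝ := 1 + s₀ * ∑ j ∈ range i, μ j with hD
    have hD0 : D ≠ 0 := (hDpos i).ne'
    set α : ℝ := s₀ / D with hα
    set β : ℝ := k₀ * s₀ / D - χ with hβ
    have hpt : ∀ ω, ((k₀ * s₀ + s₀ * ∑ j ∈ range i, ξ j ω) / D - χ) ^ 2
        = α ^ 2 * (S i ω) ^ 2 + 2 * α * β * S i ω + β ^ 2 := by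
      intro ω
      rw [hα, hβ, hSapp]
      field_simp
      ring
    have hint : (∫ ω, ((k₀ * s₀ + s₀ * ∑ j ∈ range i, ξ j ω) / D - χ) ^ 2 ∂P)
        = α ^ 2 * (∫ ω, (S i ω) ^ 2 ∂P) + 2 * α * β * (∫ ω, S i ω ∂P) + β ^ 2 := by
      simp_rw [hpt]
      rw [integral_add, integral_add, integral_const_mul, integral_const_mul,
        integral_const, probReal_univ]
      · simp
      · exact ((hSL2 i).integrable_sq).const_mul _
      · exact (((hSL2 i).integrable one_le_two)).const_mul _
      · exact (((hSL2 i).integrable_sq).const_mul _).add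
          ((((hSL2 i).integrable one_le_two)).const_mul _)
      · exact integrable_const _
    have hsq : (∫ ω, (S i ω) ^ 2 ∂P) = variance (S i) P + (∫ ω, S i ω ∂P) ^ 2 := by
      have := variance_eq_sub (hSL2 i)
      simp only [Pi.pow_apply] at this
      linarith [this]
    rw [hint, hsq, hSmean]
    have hmix : α * ((∑ j ∈ range i, μ j) * χ) + β = (k₀ * s₀ - χ) / D := by
      rw [hα, hβ, hD]
      field_simp [(hDpos i).ne']
      ring
    have hKD : K / D ^ 2 = ((k₀ * s₀ - χ) / D) ^ 2 := by rw [hK, div_pow]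
    rw [hKD]
    linear_combination (α * ((∑ j ∈ range i, μ j) * χ) + β + (k₀ * s₀ - χ) / D) * hmix
  -- bound the formula
  have hbound : ∀ i : ℕ, 1 ≤ i → (∫ ω,
      ((k₀ * s₀ + s₀ * ∑ j ∈ range i, ξ j ω) /
        (1 + s₀ * ∑ j ∈ range i, μ j) - χ) ^ 2 ∂P)
      ≤ (s₀ ^ 2 * V + K) / (s₀ * c) ^ 2 * (1 / i) := by
    intro i hi
    rw [key i]
    set D : ℝ := 1 + s₀ * ∑ j ∈ range i, μ j with hD
    have hi0 : (0:ℝ) < i := by exact_mod_cast hi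
    have hsum : c * i ≤ ∑ j ∈ range i, μ j := by
      calc c * i = ∑ _j ∈ range i, c := by simp [mul_comm]
        _ ≤ ∑ j ∈ range i, μ j := Finset.sum_le_sum fun j _ => hμc j
    have hDge : s₀ * c * i ≤ D := by
      have := mul_le_mul_of_nonneg_left hsum hs.le
      rw [hD]; nlinarith
    have hDpos' : (0:ℝ) < D := hDpos i
    have hvarle : variance (S i) P ≤ i * V := by
      rw [hSvar i]
      calc (∑ j ∈ range i, variance (ξ j) P) ≤ ∑ _j ∈ range i, V :=
            Finset.sum_le_sum fun j _ => hvar j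
        _ = i * V := by simp [mul_comm]
    have hsci : (0:ℝ) < s₀ * c * i := by positivity
    have hD2 : (s₀ * c * i) ^ 2 ≤ D ^ 2 := by nlinarith
    have hvar0 : 0 ≤ variance (S i) P := variance_nonneg _ _
    -- each term bounded
    have h1 : (s₀ / D) ^ 2 * variance (S i) P ≤ s₀ ^ 2 * (i * V) / (s₀ * c * i) ^ 2 := by
      have e1 : (s₀ / D) ^ 2 * variance (S i) P = s₀ ^ 2 * variance (S i) P / D ^ 2 := by
        field_simp
      rw [e1, div_le_div_iff₀ (by positivity) (by positivity)]
      nlinarith [mul_le_mul (mul_le_mul_of_nonneg_left hvarle (sq_nonneg s₀)) hD2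
        (sq_nonneg (s₀ * c * (i:ℝ))) (by positivity : (0:ℝ) ≤ s₀ ^ 2 * (↑i * V))]
    have h2 : K / D ^ 2 ≤ K / (s₀ * c * i) ^ 2 := by
      apply div_le_div_of_nonneg_left hK0 (by positivity) hD2
    have hrw1 : s₀ ^ 2 * (i * V) / (s₀ * c * i) ^ 2 = s₀ ^ 2 * V / (s₀ * c) ^ 2 * (1 / i) := by
      field_simp [hs.ne', hc.ne', hi0.ne']
    have hrw2 : K / (s₀ * c * i) ^ 2 ≤ K / (s₀ * c) ^ 2 * (1 / i) := by
      have h1i : (1:ℝ) ≤ i := by exact_mod_cast hi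
      have e : K / (s₀ * c) ^ 2 * (1 / i) = K / ((s₀ * c) ^ 2 * i) := by
        field_simp
      rw [e]
      apply div_le_div_of_nonneg_left hK0 (by positivity)
      calc (s₀ * c) ^ 2 * (i:ℝ) ≤ (s₀ * c) ^ 2 * (i:ℝ) ^ 2 := by nlinarith
        _ = (s₀ * c * i) ^ 2 := by ring
    calc (s₀ / D) ^ 2 * variance (S i) P + K / D ^ 2
        ≤ s₀ ^ 2 * V / (s₀ * c) ^ 2 * (1 / i) + K / (s₀ * c) ^ 2 * (1 / i) := by
          rw [← hrw1]; exact add_le_add h1 (le_trans h2 hrw2)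
      _ = (s₀ ^ 2 * V + K) / (s₀ * c) ^ 2 * (1 / i) := by ring
  have hnonneg : ∀ i : ℕ, 0 ≤ (∫ ω,
      ((k₀ * s₀ + s₀ * ∑ j ∈ range i, ξ j ω) /
        (1 + s₀ * ∑ j ∈ range i, μ j) - χ) ^ 2 ∂P) := by
    intro i
    exact integral_nonneg fun ω => sq_nonneg _
  have hlim : Tendsto (fun i : ℕ => (s₀ ^ 2 * V + K) / (s₀ * c) ^ 2 * (1 / i))
      atTop (nhds 0) := by
    have := tendsto_one_div_atTop_nhds_zero_nat (𝕜 := ℝ)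
    simpa using this.const_mul ((s₀ ^ 2 * V + K) / (s₀ * c) ^ 2)
  apply squeeze_zero' (Eventually.of_forall hnonneg) _ hlim
  filter_upwards [eventually_ge_atTop 1] with i hi using hbound i hi
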